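/- The ℚ-algebra homomorphism ℚ[b₁,b₂,b₃,d₂] → ℚ[b₁,b₂,d₂]/⟨b₁²d₂−3d₂², b₁²b₂−b₂d₂−3d₂², b₁⁴+3b₂²−9b₂d₂−3d₂², 2b₁b₂d₂−3b₁d₂², 3b₁b₂²−7b₁d₂²⟩ sending b₁ ↦ b₁, b₂ ↦ b₂, d₂ ↦ d₂ and b₃ ↦ (−b₁³+4b₁d₂)/3 descends to a ℚ-algebra isomorphism ℚ[b₁,b₂,b₃,d₂]/⟨r₁,r₂,r₃,r₄,r₅,r₆⟩ ≅ ℚ[b₁,b₂,d₂]/⟨b₁²d₂−3d₂², b₁²b₂−b₂d₂−3d₂², b₁⁴+3b₂²−9b₂d₂−3d₂², 2b₁b₂d₂−3b₁d₂², 3b₁b₂²−7b₁d₂²⟩, where r₁ := −b₁³+4b₁d₂−3b₃, r₂ := −b₁⁴+5b₁²d₂−2b₁b₃−b₂²+3b₂d₂−6d₂², r₃ := −b₁²b₂+b₂d₂+3d₂², r₄ := −b₁³b₂+b₁²b₃+5b₁b₂d₂−b₁b₂²+b₂b₃−6b₃d₂, r₅ := b₁b₃−b₂²+3b₂d₂−3d₂²,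 r₆ := b₁⁵−3b₁³b₂−4b₁³d₂+6b₁²b₃+9b₁b₂d₂+3b₁d₂²+3b₂b₃−21b₃d₂. -/

import Mathlib

open MvPolynomial

noncomputable section

/-- Variables of ℚ[b₁,b₂,d₂]: `X 0 = b₁`, `X 1 = b₂`, `X 2 = d₂`. -/
abbrev PN := MvPolynomial (Fin 3) ℚ

/-- The ideal presenting the Chow ring of N = N(3;2,3). -/
def J : Ideal PN := Ideal.span
  { X 0 ^ 2 * X 2 - 3 * X 2 ^ 2,
    X 0 ^ 2 * X 1 - X 1 * X 2 - 3 * X 2 ^ 2,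
    X 0 ^ 4 + 3 * X 1 ^ 2 - 9 * X 1 * X 2 - 3 * X 2 ^ 2,
    2 * X 0 * X 1 * X 2 - 3 * X 0 * X 2 ^ 2,
    3 * X 0 * X 1 ^ 2 - 7 * X 0 * X 2 ^ 2 }

/-- The Chow ring of N. -/
abbrev RN := PN ⧸ J

/-- Variables of ℚ[b₁,b₂,b₃,d₂]: `X 0 = b₁`, `X 1 = b₂`, `X 2 = b₃`, `X 3 = d₂`.
The ideal generated by the relations r₁,…,r₆. -/
def Irel : Ideal (MvPolynomial (Fin 4) ℚ) := Ideal.span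
  { -X 0 ^ 3 + 4 * X 0 * X 3 - 3 * X 2,
    -X 0 ^ 4 + 5 * X 0 ^ 2 * X 3 - 2 * X 0 * X 2 - X 1 ^ 2 + 3 * X 1 * X 3 - 6 * X 3 ^ 2,
    -X 0 ^ 2 * X 1 + X 1 * X 3 + 3 * X 3 ^ 2,
    -X 0 ^ 3 * X 1 + X 0 ^ 2 * X 2 + 5 * X 0 * X 1 * X 3 - X 0 * X 1 ^ 2 + X 1 * X 2
      - 6 * X 2 * X 3,
    X 0 * X 2 - X 1 ^ 2 + 3 * X 1 * X 3 - 3 * X 3 ^ 2,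
    X 0 ^ 5 - 3 * X 0 ^ 3 * X 1 - 4 * X 0 ^ 3 * X 3 + 6 * X 0 ^ 2 * X 2 + 9 * X 0 * X 1 * X 3
      + 3 * X 0 * X 3 ^ 2 + 3 * X 1 * X 2 - 21 * X 2 * X 3 }

/-- The homomorphism ℚ[b₁,b₂,b₃,d₂] → ℚ[b₁,b₂,d₂]/J sending b₁ ↦ b₁, b₂ ↦ b₂,
b₃ ↦ (−b₁³+4b₁d₂)/3, d₂ ↦ d₂. -/
def φ : MvPolynomial (Fin 4) ℚ →ₐ[ℚ] RN :=
  aeval fun i => Ideal.Quotient.mk J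
    (![X 0, X 1, C (1 / 3 : ℚ) * (-X 0 ^ 3 + 4 * X 0 * X 2), X 2] i)

/-! ### Auxiliary definitions and lemmas -/

/-- The lift of φ to the polynomial ring: b₃ ↦ (1/3)(−b₁³+4b₁d₂). -/
def ρ : MvPolynomial (Fin 4) ℚ →ₐ[ℚ] PN :=
  aeval fun i => (![X 0, X 1, C (1 / 3 : ℚ) * (-X 0 ^ 3 + 4 * X 0 * X 2), X 2] i)

lemma phi_apply (p : MvPolynomial (Fin 4) ℚ) : φ p = Ideal.Quotient.mk J (ρ p) := by
  rw [φ, ρ]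
  rw [show (Ideal.Quotient.mk J) ((aeval fun i =>
      (![X 0, X 1, C (1 / 3 : ℚ) * (-X 0 ^ 3 + 4 * X 0 * X 2), X 2] i)) p)
      = ((Ideal.Quotient.mkₐ ℚ J).comp (aeval fun i =>
      (![X 0, X 1, C (1 / 3 : ℚ) * (-X 0 ^ 3 + 4 * X 0 * X 2), X 2] i))) p from rfl,
    comp_aeval]
  rfl

/-- The inverse on polynomial rings: b₁ ↦ b₁, b₂ ↦ b₂, d₂ ↦ d₂. -/
def ρ' : PN →ₐ[ℚ] MvPolynomial (Fin 4) ℚ :=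
  aeval fun i => (![X 0, X 1, X 3] i)

/-- The inverse map into the quotient. -/
def ψ : PN →ₐ[ℚ] (MvPolynomial (Fin 4) ℚ ⧸ Irel) :=
  aeval fun i => Ideal.Quotient.mk Irel (![X 0, X 1, X 3] i)

lemma psi_apply (p : PN) : ψ p = Ideal.Quotient.mk Irel (ρ' p) := by
  rw [ψ, ρ']
  rw [show (Ideal.Quotient.mk Irel) ((aeval fun i => (![X 0, X 1, X 3] i)) p)
      = ((Ideal.Quotient.mkₐ ℚ Irel).comp (aeval fun i => (![X 0, X 1, X 3] i))) p from rfl,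
    comp_aeval]
  rfl

lemma mem_span5 {R : Type*} [CommRing R] {g₁ g₂ g₃ g₄ g₅ c₁ c₂ c₃ c₄ c₅ p : R}
    (h : p = c₁ * g₁ + c₂ * g₂ + c₃ * g₃ + c₄ * g₄ + c₅ * g₅) :
    p ∈ Ideal.span ({g₁, g₂, g₃, g₄, g₅} : Set R) := by
  rw [h]
  refine add_mem (add_mem (add_mem (add_mem ?_ ?_) ?_) ?_) ?_ <;>
    apply Ideal.mul_mem_left <;> apply Ideal.subset_span
  · exact Set.mem_insert _ _
  · exact Set.mem_insert_of_mem _ (Set.mem_insert _ _)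
  · exact Set.mem_insert_of_mem _ (Set.mem_insert_of_mem _ (Set.mem_insert _ _))
  · exact Set.mem_insert_of_mem _ (Set.mem_insert_of_mem _
      (Set.mem_insert_of_mem _ (Set.mem_insert _ _)))
  · exact Set.mem_insert_of_mem _ (Set.mem_insert_of_mem _
      (Set.mem_insert_of_mem _ (Set.mem_insert_of_mem _ rfl)))

lemma mem_span6 {R : Type*} [CommRing R] {g₁ g₂ g₃ g₄ g₅ g₆ c₁ c₂ c₃ c₄ c₅ c₆ p : R}
    (h : p = c₁ * g₁ + c₂ * g₂ + c₃ * g₃ + c₄ * g₄ + c₅ * g₅ + c₆ * g₆) :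
    p ∈ Ideal.span ({g₁, g₂, g₃, g₄, g₅, g₆} : Set R) := by
  rw [h]
  refine add_mem (add_mem (add_mem (add_mem (add_mem ?_ ?_) ?_) ?_) ?_) ?_ <;>
    apply Ideal.mul_mem_left <;> apply Ideal.subset_span
  · exact Set.mem_insert _ _
  · exact Set.mem_insert_of_mem _ (Set.mem_insert _ _)
  · exact Set.mem_insert_of_mem _ (Set.mem_insert_of_mem _ (Set.mem_insert _ _))
  · exact Set.mem_insert_of_mem _ (Set.mem_insert_of_mem _
      (Set.mem_insert_of_mem _ (Set.mem_insert _ _)))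
  · exact Set.mem_insert_of_mem _ (Set.mem_insert_of_mem _
      (Set.mem_insert_of_mem _ (Set.mem_insert_of_mem _ (Set.mem_insert _ _))))
  · exact Set.mem_insert_of_mem _ (Set.mem_insert_of_mem _ (Set.mem_insert_of_mem _
      (Set.mem_insert_of_mem _ (Set.mem_insert_of_mem _ rfl))))

lemma hc3 : (C (1 / 3 : ℚ) * 3 : PN) = 1 := by
  rw [show ((3 : PN)) = C (3 : ℚ) from by simp [map_ofNat], ← C_mul]
  norm_num

lemma hc4 : (C (1 / 3 : ℚ) * 3 : MvPolynomial (Fin 4) ℚ) = 1 := by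
  rw [show ((3 : MvPolynomial (Fin 4) ℚ)) = C (3 : ℚ) from by simp [map_ofNat], ← C_mul]
  norm_num

lemma third_mem {σ : Type*} {I : Ideal (MvPolynomial σ ℚ)} {p : MvPolynomial σ ℚ}
    (h : 3 * p ∈ I) : p ∈ I := by
  have hc : (C (1 / 3 : ℚ) * 3 : MvPolynomial σ ℚ) = 1 := by
    rw [show ((3 : MvPolynomial σ ℚ)) = C (3 : ℚ) from by simp [map_ofNat], ← C_mul]
    norm_num
  have : p = C (1 / 3 : ℚ) * (3 * p) := by rw [← mul_assoc, hc, one_mul]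
  rw [this]
  exact Ideal.mul_mem_left _ _ h

/-- Irel ≤ ker φ. -/
lemma Irel_le_ker : Irel ≤ RingHom.ker φ := by
  rw [Irel, Ideal.span_le]
  intro p hp
  simp only [Set.mem_insert_iff, Set.mem_singleton_iff] at hp
  have key : ∀ q : MvPolynomial (Fin 4) ℚ, ρ q ∈ J → p = q → p ∈ (RingHom.ker φ : Set _) := by
    rintro q hq rfl
    rw [SetLike.mem_coe, RingHom.mem_ker, phi_apply]
    exact (Ideal.Quotient.eq_zero_iff_mem).mpr hq
  rcases hp with rfl | rfl | rfl | rfl | rfl | rfl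
  · refine key _ ?_ rfl
    rw [J]
    refine mem_span5 (c₁ := 0) (c₂ := 0) (c₃ := 0) (c₄ := 0) (c₅ := 0) ?_
    simp only [ρ, map_add, map_sub, map_neg, map_mul, map_pow, map_ofNat, aeval_X, Matrix.cons_val_zero, Matrix.cons_val_one, Matrix.cons_val_two, Matrix.cons_val_three, Matrix.tail_cons, Matrix.head_cons]
    linear_combination (1 * X 0 ^ 3 + (-4) * X 0 * X 2) * hc3
  · refine key _ ?_ rfl
    rw [J]
    refine mem_span5 (c₁ := 7 * C (1/3 : ℚ)) (c₂ := 0) (c₃ := (-1) * C (1/3 : ℚ))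
      (c₄ := 0) (c₅ := 0) ?_
    simp only [ρ, map_add, map_sub, map_neg, map_mul, map_pow, map_ofNat, aeval_X, Matrix.cons_val_zero, Matrix.cons_val_one, Matrix.cons_val_two, Matrix.cons_val_three, Matrix.tail_cons, Matrix.head_cons]
    linear_combination (1 * X 0 ^ 4 + (-5) * X 0 ^ 2 * X 2 + 1 * X 1 ^ 2 + (-3) * X 1 * X 2
      + 6 * X 2 ^ 2) * hc3
  · refine key _ ?_ rfl
    rw [J]
    refine mem_span5 (c₁ := 0) (c₂ := -1) (c₃ := 0) (c₄ := 0) (c₅ := 0) ?_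
    simp only [ρ, map_add, map_sub, map_neg, map_mul, map_pow, map_ofNat, aeval_X, Matrix.cons_val_zero, Matrix.cons_val_one, Matrix.cons_val_two, Matrix.cons_val_three, Matrix.tail_cons, Matrix.head_cons]
    ring
  · refine key _ ?_ rfl
    rw [J]
    refine mem_span5 (c₁ := 10 * C (1/3 : ℚ) * X 0) (c₂ := (-4) * C (1/3 : ℚ) * X 0)
      (c₃ := (-1) * C (1/3 : ℚ) * X 0) (c₄ := 1) (c₅ := 0) ?_
    simp only [ρ, map_add, map_sub, map_neg, map_mul, map_pow, map_ofNat, aeval_X, Matrix.cons_val_zero, Matrix.cons_val_one, Matrix.cons_val_two, Matrix.cons_val_three, Matrix.tail_cons, Matrix.head_cons]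
    linear_combination (1 * X 0 ^ 3 * X 1 + 1 * X 0 * X 1 ^ 2 + (-3) * X 0 * X 1 * X 2
      + (-3) * X 0 * X 2 ^ 2) * hc3
  · refine key _ ?_ rfl
    rw [J]
    refine mem_span5 (c₁ := 4 * C (1/3 : ℚ)) (c₂ := 0) (c₃ := (-1) * C (1/3 : ℚ))
      (c₄ := 0) (c₅ := 0) ?_
    simp only [ρ, map_add, map_sub, map_neg, map_mul, map_pow, map_ofNat, aeval_X, Matrix.cons_val_zero, Matrix.cons_val_one, Matrix.cons_val_two, Matrix.cons_val_three, Matrix.tail_cons, Matrix.head_cons]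
    linear_combination (1 * X 1 ^ 2 + (-3) * X 1 * X 2 + 3 * X 2 ^ 2) * hc3
  · refine key _ ?_ rfl
    rw [J]
    refine mem_span5 (c₁ := 11 * X 0) (c₂ := (-4) * X 0) (c₃ := (-1) * X 0)
      (c₄ := 0) (c₅ := 1) ?_
    simp only [ρ, map_add, map_sub, map_neg, map_mul, map_pow, map_ofNat, aeval_X, Matrix.cons_val_zero, Matrix.cons_val_one, Matrix.cons_val_two, Matrix.cons_val_three, Matrix.tail_cons, Matrix.head_cons]
    linear_combination ((-2) * X 0 ^ 5 + (-1) * X 0 ^ 3 * X 1 + 15 * X 0 ^ 3 * X 2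
      + 4 * X 0 * X 1 * X 2 + (-28) * X 0 * X 2 ^ 2) * hc3

/-- J ≤ ker ψ. -/
lemma J_le_ker : J ≤ RingHom.ker ψ := by
  rw [J, Ideal.span_le]
  intro p hp
  simp only [Set.mem_insert_iff, Set.mem_singleton_iff] at hp
  have key : ∀ q : PN, ρ' q ∈ Irel → p = q → p ∈ (RingHom.ker ψ : Set _) := by
    rintro q hq rfl
    rw [SetLike.mem_coe, RingHom.mem_ker, psi_apply]
    exact (Ideal.Quotient.eq_zero_iff_mem).mpr hq
  rcases hp with rfl | rfl | rfl | rfl | rfl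
  · refine key _ (third_mem ?_) rfl
    rw [Irel]
    refine mem_span6 (c₁ := (-3) * X 0) (c₂ := 3) (c₃ := 0) (c₄ := 0) (c₅ := -3)
      (c₆ := 0) ?_
    simp only [ρ', map_add, map_sub, map_neg, map_mul, map_pow, map_ofNat, aeval_X, Matrix.cons_val_zero, Matrix.cons_val_one, Matrix.cons_val_two, Matrix.cons_val_three, Matrix.tail_cons, Matrix.head_cons]
    ring
  · refine key _ (third_mem ?_) rfl
    rw [Irel]
    refine mem_span6 (c₁ := 0) (c₂ := 0) (c₃ := -3) (c₄ := 0) (c₅ := 0) (c₆ := 0) ?_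
    simp only [ρ', map_add, map_sub, map_neg, map_mul, map_pow, map_ofNat, aeval_X, Matrix.cons_val_zero, Matrix.cons_val_one, Matrix.cons_val_two, Matrix.cons_val_three, Matrix.tail_cons, Matrix.head_cons]
    ring
  · refine key _ (third_mem ?_) rfl
    rw [Irel]
    refine mem_span6 (c₁ := (-15) * X 0) (c₂ := 12) (c₃ := 0) (c₄ := 0) (c₅ := -21)
      (c₆ := 0) ?_
    simp only [ρ', map_add, map_sub, map_neg, map_mul, map_pow, map_ofNat, aeval_X, Matrix.cons_val_zero, Matrix.cons_val_one, Matrix.cons_val_two, Matrix.cons_val_three, Matrix.tail_cons, Matrix.head_cons]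
    ring
  · refine key _ (third_mem ?_) rfl
    rw [Irel]
    refine mem_span6 (c₁ := 6 * X 0 ^ 2 + X 1 - 6 * X 3) (c₂ := (-6) * X 0)
      (c₃ := (-4) * X 0) (c₄ := 3) (c₅ := 3 * X 0) (c₆ := 0) ?_
    simp only [ρ', map_add, map_sub, map_neg, map_mul, map_pow, map_ofNat, aeval_X, Matrix.cons_val_zero, Matrix.cons_val_one, Matrix.cons_val_two, Matrix.cons_val_three, Matrix.tail_cons, Matrix.head_cons]
    ring
  · refine key _ (third_mem ?_) rfl
    rw [Irel]
    refine mem_span6 (c₁ := 24 * X 0 ^ 2 + 3 * X 1 - 21 * X 3) (c₂ := (-21) * X 0)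
      (c₃ := (-12) * X 0) (c₄ := 0) (c₅ := 12 * X 0) (c₆ := 3) ?_
    simp only [ρ', map_add, map_sub, map_neg, map_mul, map_pow, map_ofNat, aeval_X, Matrix.cons_val_zero, Matrix.cons_val_one, Matrix.cons_val_two, Matrix.cons_val_three, Matrix.tail_cons, Matrix.head_cons]
    ring

/-- φ kills the relations r₁,…,r₆, and descends to a ℚ-algebra isomorphism
ℚ[b₁,b₂,b₃,d₂]/⟨r₁,…,r₆⟩ ≅ ℚ[b₁,b₂,d₂]/J. -/
theorem chow_ring_N_presentations :
    Irel ≤ RingHom.ker φ ∧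
    ∃ e : (MvPolynomial (Fin 4) ℚ ⧸ Irel) ≃ₐ[ℚ] RN,
      ∀ p : MvPolynomial (Fin 4) ℚ, e (Ideal.Quotient.mk Irel p) = φ p := by
  have h1 : ∀ a ∈ Irel, φ a = 0 := fun a ha => Irel_le_ker ha
  have h2 : ∀ a ∈ J, ψ a = 0 := fun a ha => J_le_ker ha
  set φ' : (MvPolynomial (Fin 4) ℚ ⧸ Irel) →ₐ[ℚ] RN := Ideal.Quotient.liftₐ Irel φ h1 with hφ'
  set ψ' : RN →ₐ[ℚ] (MvPolynomial (Fin 4) ℚ ⧸ Irel) := Ideal.Quotient.liftₐ J ψ h2 with hψ'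
  have hφ'mk : ∀ p, φ' (Ideal.Quotient.mk Irel p) = φ p := fun p => by
    rw [hφ', Ideal.Quotient.liftₐ_apply]; exact Ideal.Quotient.lift_mk _ _ _
  have hψ'mk : ∀ p, ψ' (Ideal.Quotient.mk J p) = ψ p := fun p => by
    rw [hψ', Ideal.Quotient.liftₐ_apply]; exact Ideal.Quotient.lift_mk _ _ _
  have h3 : φ'.comp ψ' = AlgHom.id ℚ RN := by
    apply Ideal.Quotient.algHom_ext
    apply MvPolynomial.algHom_ext
    intro i
    fin_cases i <;>
      simp only [AlgHom.comp_apply, Ideal.Quotient.mkₐ_eq_mk, AlgHom.id_apply] <;>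
      rw [hψ'mk] <;>
      simp only [ψ, aeval_X, Matrix.cons_val_zero, Matrix.cons_val_one, Matrix.head_cons,
        Matrix.cons_val_two, Matrix.tail_cons, Fin.isValue, Fin.reduceFinMk] <;>
      rw [hφ'mk] <;>
      simp [φ]
  have h4 : ψ'.comp φ' = AlgHom.id ℚ (MvPolynomial (Fin 4) ℚ ⧸ Irel) := by
    apply Ideal.Quotient.algHom_ext
    apply MvPolynomial.algHom_ext
    intro i
    fin_cases i <;>
      simp only [AlgHom.comp_apply, Ideal.Quotient.mkₐ_eq_mk, AlgHom.id_apply] <;>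
      rw [hφ'mk] <;>
      simp only [φ, aeval_X, Matrix.cons_val_zero, Matrix.cons_val_one, Matrix.head_cons,
        Matrix.cons_val_two, Matrix.cons_val_three, Matrix.tail_cons, Fin.isValue, Fin.reduceFinMk]
    · rw [hψ'mk]; simp [ψ]
    · rw [hψ'mk]; simp [ψ]
    · rw [hψ'mk, psi_apply]
      have hrho : ρ' (C (1 / 3 : ℚ) * (-X 0 ^ 3 + 4 * X 0 * X 2))
          = C (1 / 3 : ℚ) * (-X 0 ^ 3 + 4 * X 0 * X 3) := by
        simp only [ρ', map_add, map_sub, map_neg, map_mul, map_pow, map_ofNat, aeval_X, aeval_C,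
          algebraMap_eq, Matrix.cons_val_zero, Matrix.cons_val_two, Matrix.tail_cons,
          Matrix.head_cons]
      rw [hrho, Ideal.Quotient.eq, Irel]
      refine mem_span6 (c₁ := C (1/3 : ℚ)) (c₂ := 0) (c₃ := 0) (c₄ := 0) (c₅ := 0)
        (c₆ := 0) ?_
      have h32 : (C (1/3 : ℚ) : MvPolynomial (Fin 4) ℚ) * (3 * X 2) = X 2 := by
        rw [← mul_assoc, hc4, one_mul]
      rw [zero_mul, zero_mul, zero_mul, zero_mul, zero_mul, add_zero, add_zero, add_zero,
        add_zero, add_zero, mul_sub, h32]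
    · rw [hψ'mk]; simp [ψ]
  exact ⟨Irel_le_ker, AlgEquiv.ofAlgHom φ' ψ' h3 h4, fun p => hφ'mk p⟩
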